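/- In X = ℝ², for any integer n ≥ 2 and θ with 1/√(2n) ≤ cos θ < 1/√2 and α = 1/(2n cos θ): αR_θ and αR_{−θ} are firmly nonexpansive, n·(αR_θ) + n·(αR_{−θ}) = Id, yet n·(αR_θ) is not firmly nonexpansive. Thus the partial sum property fails for firmly nonexpansive mappings. -/

import Mathlib

open scoped RealInnerProductSpace

noncomputable def rot (θ : ℝ) (x : EuclideanSpace ℝ (Fin 2)) : EuclideanSpace ℝ (Fin 2) :=
  WithLp.toLp 2 ![Real.cos θ * x 0 - Real.sin θ * x 1, Real.sin θ * x 0 + Real.cos θ * x 1]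

def FirmlyNonexpansive {X : Type*} [NormedAddCommGroup X] [InnerProductSpace ℝ X]
    (T : X → X) : Prop :=
  ∀ x y : X, ‖T x - T y‖ ^ 2 ≤ ⟪x - y, T x - T y⟫

lemma inner2 (x y : EuclideanSpace ℝ (Fin 2)) : ⟪x, y⟫ = x 0 * y 0 + x 1 * y 1 := by
  simp [PiLp.inner_apply, RCLike.inner_apply, Fin.sum_univ_two, mul_comm]

lemma rot_calc (θ β : ℝ) (x y : EuclideanSpace ℝ (Fin 2)) :
    ‖β • rot θ x - β • rot θ y‖ ^ 2
      = β ^ 2 * ((x 0 - y 0) ^ 2 + (x 1 - y 1) ^ 2) ∧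
    ⟪x - y, β • rot θ x - β • rot θ y⟫
      = β * Real.cos θ * ((x 0 - y 0) ^ 2 + (x 1 - y 1) ^ 2) := by
  have hs := Real.sin_sq_add_cos_sq θ
  constructor
  · rw [← real_inner_self_eq_norm_sq, inner2]
    simp only [PiLp.sub_apply, PiLp.smul_apply, rot, PiLp.toLp_apply, Matrix.cons_val_zero, Matrix.cons_val_one,
      Matrix.head_cons, smul_eq_mul]
    linear_combination (β ^ 2 * ((x 0 - y 0) ^ 2 + (x 1 - y 1) ^ 2)) * hs
  · rw [inner2]
    simp only [PiLp.sub_apply, PiLp.smul_apply, rot, PiLp.toLp_apply, Matrix.cons_val_zero, Matrix.cons_val_one,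
      Matrix.head_cons, smul_eq_mul]
    ring

theorem stmt16 (n : ℕ) (hn : 2 ≤ n) (θ : ℝ)
    (h₁ : 1 / Real.sqrt (2 * n) ≤ Real.cos θ) (h₂ : Real.cos θ < 1 / Real.sqrt 2)
    (α : ℝ) (hα : α = 1 / (2 * n * Real.cos θ)) :
    FirmlyNonexpansive (fun x => α • rot θ x) ∧
      FirmlyNonexpansive (fun x => α • rot (-θ) x) ∧
      (∀ x : EuclideanSpace ℝ (Fin 2),
        (n : ℝ) • (α • rot θ x) + (n : ℝ) • (α • rot (-θ) x) = x) ∧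
      ¬ FirmlyNonexpansive (fun x => (n : ℝ) • (α • rot θ x)) := by
  have hn0 : (0:ℝ) < n := by positivity
  have hc0 : 0 < Real.cos θ := lt_of_lt_of_le (by positivity) h₁
  have hs2n : Real.sqrt (2 * n) ^ 2 = 2 * n := Real.sq_sqrt (by positivity)
  have hs2np : 0 < Real.sqrt (2 * n) := Real.sqrt_pos.2 (by positivity)
  have hcsq : 1 / (2 * (n:ℝ)) ≤ Real.cos θ ^ 2 := by
    have h := mul_le_mul h₁ h₁ (by positivity) hc0.le
    rw [div_mul_div_comm, one_mul, ← sq] at h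
    rw [hs2n] at h
    nlinarith [h]
  have hs2 : Real.sqrt 2 ^ 2 = 2 := Real.sq_sqrt (by norm_num)
  have hcsq2 : Real.cos θ ^ 2 < 1 / 2 := by
    have h := mul_self_lt_mul_self hc0.le h₂
    have h' : 1 / Real.sqrt 2 * (1 / Real.sqrt 2) = 1 / 2 := by
      rw [div_mul_div_comm, one_mul, ← sq, hs2]
    nlinarith [h, h']
  have hα0 : 0 < α := by rw [hα]; positivity
  have hαle : α ≤ Real.cos θ := by
    rw [hα, div_le_iff₀ (by positivity)]
    rw [div_le_iff₀ (by positivity)] at hcsq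
    nlinarith
  refine ⟨?_, ?_, ?_, ?_⟩
  · intro x y
    obtain ⟨e1, e2⟩ := rot_calc θ α x y
    simp only []
    rw [e1, e2]
    nlinarith [sq_nonneg (x 0 - y 0), sq_nonneg (x 1 - y 1)]
  · intro x y
    obtain ⟨e1, e2⟩ := rot_calc (-θ) α x y
    rw [Real.cos_neg] at e2
    simp only []
    rw [e1, e2]
    nlinarith [sq_nonneg (x 0 - y 0), sq_nonneg (x 1 - y 1)]
  · intro x
    have hone : 2 * (n:ℝ) * Real.cos θ * α = 1 := by
      rw [hα]; field_simp
    ext i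
    fin_cases i <;>
      simp [rot, PiLp.add_apply, PiLp.smul_apply, Real.cos_neg, Real.sin_neg] <;>
      [linear_combination (x 0) * hone; linear_combination (x 1) * hone]
  · intro h
    have hv := h (WithLp.toLp 2 ![(1:ℝ), 0]) 0
    simp only [smul_smul] at hv
    obtain ⟨e1, e2⟩ := rot_calc θ ((n:ℝ) * α) (WithLp.toLp 2 ![(1:ℝ), 0]) 0
    rw [e1, e2] at hv
    have h0 : (0 : EuclideanSpace ℝ (Fin 2)) 0 = 0 := rfl
    have h1 : (0 : EuclideanSpace ℝ (Fin 2)) 1 = 0 := rfl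
    have hv0 : (WithLp.toLp 2 ![(1:ℝ), 0] : EuclideanSpace ℝ (Fin 2)) 0 = 1 := rfl
    have hv1 : (WithLp.toLp 2 ![(1:ℝ), 0] : EuclideanSpace ℝ (Fin 2)) 1 = 0 := rfl
    rw [h0, h1, hv0, hv1] at hv
    have hnα : (n:ℝ) * α = 1 / (2 * Real.cos θ) := by
      rw [hα]; field_simp
    rw [hnα] at hv
    norm_num at hv
    clear h e1 e2 h0 h1 hv0 hv1
    have htc : (Real.cos θ)⁻¹ * Real.cos θ = 1 := inv_mul_cancel₀ hc0.ne'
    nlinarith [hv, hcsq2, hc0, inv_pos.2 hc0, htc]
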